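/- arXiv:2011.00501 — 2 statements merged into one kernel-verified Lean document; each statement's English description precedes it below -/
import Mathlib

section
/- Let B be an R-bilinear antisymmetric biderivation of D with values in I(P,R). Then: (a) for all x < y in P, B(e_x, e_{xy}) = B(e_{xy}, e_y); (b) for all x < y < z in P, B(e_{xy}, e_{yz}) = B(e_x, e_{xy})(x,y) · e_{xz} (the scalar B(e_x,e_{xy})(x,y) ∈ R times e_{xz}). -/
/-- The element `e_{xy}` of the incidence algebra: value `1` at `(x, y)` and `0` elsewhere. -/
def esingle (R : Type*) {P : Type*} [CommRing R] [PartialOrder P] [DecidableEq P]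
    {x y : P} (_h : x ≤ y) : IncidenceAlgebra R P :=
  ⟨fun u v => if u = x ∧ v = y then 1 else 0, fun u v huv => by
    try dsimp only
    split_ifs with h'
    · obtain ⟨rfl, rfl⟩ := h'
      exact absurd _h huv
    · rfl⟩

/-- `D`: the `R`-span of the elements `e_{xy}`, `x ≤ y`, i.e. the finitely supported elements of
the incidence algebra. -/
def Dspan (R P : Type*) [CommRing R] [PartialOrder P] [DecidableEq P] :
    Submodule R (IncidenceAlgebra R P) :=
  Submodule.span R {f : IncidenceAlgebra R P | ∃ (x y : P) (h : x ≤ y), f = esingle R h}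

section Aux
open scoped Classical
set_option linter.unusedSectionVars false
variable {R P : Type*} [CommRing R] [PartialOrder P] [LocallyFiniteOrder P] [DecidableEq P]

lemma esingle_apply {x y : P} (h : x ≤ y) (u v : P) :
    esingle R h u v = if u = x ∧ v = y then 1 else 0 := rfl

lemma esingle_mem_Dspan {x y : P} (h : x ≤ y) : esingle R h ∈ Dspan R P :=
  Submodule.subset_span ⟨x, y, h, rfl⟩

lemma esingle_mul_apply {a b : P} (hab : a ≤ b) (f : IncidenceAlgebra R P) (u v : P) :
    (esingle R hab * f) u v = if u = a ∧ b ≤ v then f b v else 0 := by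
  rw [IncidenceAlgebra.mul_apply]
  by_cases hu : u = a
  · subst hu
    by_cases hb : b ≤ v
    · rw [if_pos ⟨rfl, hb⟩, Finset.sum_eq_single b]
      · simp [esingle_apply]
      · intro z _ hzb; simp [esingle_apply, hzb]
      · intro hb'; exact absurd (Finset.mem_Icc.2 ⟨hab, hb⟩) hb'
    · rw [if_neg (by tauto)]
      refine Finset.sum_eq_zero fun z hz => ?_
      have : z ≠ b := by rintro rfl; exact hb (Finset.mem_Icc.1 hz).2
      simp [esingle_apply, this]
  · rw [if_neg (by tauto)]
    exact Finset.sum_eq_zero fun z _ => by simp [esingle_apply, hu]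

lemma mul_esingle_apply {c d : P} (hcd : c ≤ d) (f : IncidenceAlgebra R P) (u v : P) :
    (f * esingle R hcd) u v = if v = d ∧ u ≤ c then f u c else 0 := by
  rw [IncidenceAlgebra.mul_apply]
  by_cases hv : v = d
  · subst hv
    by_cases hc : u ≤ c
    · rw [if_pos ⟨rfl, hc⟩, Finset.sum_eq_single c]
      · simp [esingle_apply]
      · intro z _ hzc; simp [esingle_apply, hzc]
      · intro hc'; exact absurd (Finset.mem_Icc.2 ⟨hc, hcd⟩) hc'
    · rw [if_neg (by tauto)]
      refine Finset.sum_eq_zero fun z hz => ?_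
      have : z ≠ c := by rintro rfl; exact hc (Finset.mem_Icc.1 hz).1
      simp [esingle_apply, this]
  · rw [if_neg (by tauto)]
    exact Finset.sum_eq_zero fun z _ => by simp [esingle_apply, hv]

lemma esingle_mul_esingle_same {a b d : P} (hab : a ≤ b) (hbd : b ≤ d) (had : a ≤ d) :
    esingle R hab * esingle R hbd = esingle R had := by
  ext u v _
  rw [esingle_mul_apply, esingle_apply, esingle_apply]
  by_cases h1 : u = a
  · by_cases h2 : v = d
    · subst h1; subst h2; simp [hbd]
    · simp [h1, h2]
  · simp [h1]

lemma esingle_mul_esingle_ne {a b c d : P} (hab : a ≤ b) (hcd : c ≤ d) (h : b ≠ c) :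
    esingle R hab * esingle R hcd = 0 := by
  ext u v _
  rw [esingle_mul_apply, esingle_apply]
  simp [h, IncidenceAlgebra.zero_apply]

lemma sandwich_zero {a b c d : P} (hab : a ≤ b) (hcd : c ≤ d) (h : ¬ b ≤ c)
    (f : IncidenceAlgebra R P) : esingle R hab * f * esingle R hcd = 0 := by
  ext u v _
  rw [mul_esingle_apply, esingle_mul_apply]
  simp [h, IncidenceAlgebra.zero_apply]

lemma sandwich_smul {a b c d : P} (hab : a ≤ b) (hbc : b ≤ c) (hcd : c ≤ d) (had : a ≤ d)
    (f : IncidenceAlgebra R P) :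
    esingle R hab * f * esingle R hcd = f b c • esingle R had := by
  ext u v _
  rw [mul_esingle_apply, esingle_mul_apply, IncidenceAlgebra.constSMul_apply, esingle_apply]
  by_cases h1 : u = a
  · subst h1
    by_cases h2 : v = d
    · subst h2; simp [hbc, hab.trans hbc]
    · simp [h2]
  · simp [h1]

variable (B : IncidenceAlgebra R P → IncidenceAlgebra R P → IncidenceAlgebra R P)
    (hder_l : ∀ f g h, f ∈ Dspan R P → g ∈ Dspan R P → h ∈ Dspan R P →
      B (f * g) h = B f h * g + f * B g h)
    (hder_r : ∀ f g h, f ∈ Dspan R P → g ∈ Dspan R P → h ∈ Dspan R P →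
      B f (g * h) = B f g * h + g * B f h)
    (hanti : ∀ f, f ∈ Dspan R P → B f f = 0)

include hder_l hder_r hanti in
/-- `B(e_x, e_{xy})` is a scalar multiple of `e_{xy}`. -/
lemma aux_lemA (x y : P) (hxy : x < y) :
    B (esingle R (le_refl x)) (esingle R hxy.le) =
      (B (esingle R (le_refl x)) (esingle R hxy.le)) x y • esingle R hxy.le := by
  have h1 : B (esingle R (le_refl x)) (esingle R hxy.le)
      = esingle R (le_refl x) * B (esingle R (le_refl x)) (esingle R hxy.le) := by
    have h := hder_r (esingle R (le_refl x)) (esingle R (le_refl x)) (esingle R hxy.le)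
      (esingle_mem_Dspan _) (esingle_mem_Dspan _) (esingle_mem_Dspan _)
    rw [esingle_mul_esingle_same (le_refl x) hxy.le hxy.le, hanti _ (esingle_mem_Dspan (le_refl x)),
      zero_mul, zero_add] at h
    exact h
  have hC : B (esingle R (le_refl x)) (esingle R (le_refl y))
      = B (esingle R (le_refl x)) (esingle R (le_refl y)) * esingle R (le_refl x)
        + esingle R (le_refl x) * B (esingle R (le_refl x)) (esingle R (le_refl y)) := by
    have h := hder_l (esingle R (le_refl x)) (esingle R (le_refl x)) (esingle R (le_refl y))
      (esingle_mem_Dspan _) (esingle_mem_Dspan _) (esingle_mem_Dspan _)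
    rw [esingle_mul_esingle_same (le_refl x) (le_refl x) (le_refl x)] at h
    exact h
  have h3 : esingle R hxy.le * B (esingle R (le_refl x)) (esingle R (le_refl y)) = 0 := by
    conv_lhs => rw [hC]
    rw [mul_add, ← mul_assoc, ← mul_assoc, sandwich_zero hxy.le (le_refl x) hxy.not_ge,
      esingle_mul_esingle_ne hxy.le (le_refl x) hxy.ne', zero_mul, add_zero]
  have h2 : B (esingle R (le_refl x)) (esingle R hxy.le)
      = B (esingle R (le_refl x)) (esingle R hxy.le) * esingle R (le_refl y) := by
    have h := hder_r (esingle R (le_refl x)) (esingle R hxy.le) (esingle R (le_refl y))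
      (esingle_mem_Dspan _) (esingle_mem_Dspan _) (esingle_mem_Dspan _)
    rw [esingle_mul_esingle_same hxy.le (le_refl y) hxy.le, h3, add_zero] at h
    exact h
  have h4 : B (esingle R (le_refl x)) (esingle R hxy.le)
      = esingle R (le_refl x) * B (esingle R (le_refl x)) (esingle R hxy.le)
        * esingle R (le_refl y) := by
    rw [mul_assoc, ← h2]; exact h1
  conv_lhs => rw [h4]
  rw [sandwich_smul (le_refl x) hxy.le (le_refl y) hxy.le]

include hder_l hder_r hanti in
/-- `B(e_{xy}, e_y)` is a scalar multiple of `e_{xy}`. -/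
lemma aux_lemA' (x y : P) (hxy : x < y) :
    B (esingle R hxy.le) (esingle R (le_refl y)) =
      (B (esingle R hxy.le) (esingle R (le_refl y))) x y • esingle R hxy.le := by
  have h1 : B (esingle R hxy.le) (esingle R (le_refl y))
      = B (esingle R hxy.le) (esingle R (le_refl y)) * esingle R (le_refl y) := by
    have h := hder_l (esingle R hxy.le) (esingle R (le_refl y)) (esingle R (le_refl y))
      (esingle_mem_Dspan _) (esingle_mem_Dspan _) (esingle_mem_Dspan _)
    rw [esingle_mul_esingle_same hxy.le (le_refl y) hxy.le, hanti _ (esingle_mem_Dspan (le_refl y)),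
      mul_zero, add_zero] at h
    exact h
  have hC : B (esingle R (le_refl x)) (esingle R (le_refl y))
      = B (esingle R (le_refl x)) (esingle R (le_refl y)) * esingle R (le_refl y)
        + esingle R (le_refl y) * B (esingle R (le_refl x)) (esingle R (le_refl y)) := by
    have h := hder_r (esingle R (le_refl x)) (esingle R (le_refl y)) (esingle R (le_refl y))
      (esingle_mem_Dspan _) (esingle_mem_Dspan _) (esingle_mem_Dspan _)
    rw [esingle_mul_esingle_same (le_refl y) (le_refl y) (le_refl y)] at h
    exact h
  have h3 : B (esingle R (le_refl x)) (esingle R (le_refl y)) * esingle R hxy.le = 0 := by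
    conv_lhs => rw [hC]
    rw [add_mul, mul_assoc, esingle_mul_esingle_ne (le_refl y) hxy.le hxy.ne', mul_zero, zero_add,
      sandwich_zero (le_refl y) hxy.le hxy.not_ge]
  have h2 : B (esingle R hxy.le) (esingle R (le_refl y))
      = esingle R (le_refl x) * B (esingle R hxy.le) (esingle R (le_refl y)) := by
    have h := hder_l (esingle R (le_refl x)) (esingle R hxy.le) (esingle R (le_refl y))
      (esingle_mem_Dspan _) (esingle_mem_Dspan _) (esingle_mem_Dspan _)
    rw [esingle_mul_esingle_same (le_refl x) hxy.le hxy.le, h3, zero_add] at h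
    exact h
  have h4 : B (esingle R hxy.le) (esingle R (le_refl y))
      = esingle R (le_refl x) * B (esingle R hxy.le) (esingle R (le_refl y))
        * esingle R (le_refl y) := by
    rw [mul_assoc, ← h1]; exact h2
  conv_lhs => rw [h4]
  rw [sandwich_smul (le_refl x) hxy.le (le_refl y) hxy.le]

end Aux

/-- For an `R`-bilinear antisymmetric biderivation `B` of `D` with values in
`I(P,R)`: (a) `B(e_x, e_{xy}) = B(e_{xy}, e_y)` for `x < y`; and (b)
`B(e_{xy}, e_{yz}) = B(e_x, e_{xy})(x,y) • e_{xz}` for `x < y < z`. -/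
theorem bider_esingle_relations
    {R P : Type*} [CommRing R] [PartialOrder P] [LocallyFiniteOrder P] [DecidableEq P]
    (B : IncidenceAlgebra R P → IncidenceAlgebra R P → IncidenceAlgebra R P)
    (hadd_l : ∀ f g h, f ∈ Dspan R P → g ∈ Dspan R P → h ∈ Dspan R P →
      B (f + g) h = B f h + B g h)
    (hadd_r : ∀ f g h, f ∈ Dspan R P → g ∈ Dspan R P → h ∈ Dspan R P →
      B f (g + h) = B f g + B f h)
    (hsmul_l : ∀ (r : R) (f h), f ∈ Dspan R P → h ∈ Dspan R P → B (r • f) h = r • B f h)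
    (hsmul_r : ∀ (r : R) (f h), f ∈ Dspan R P → h ∈ Dspan R P → B f (r • h) = r • B f h)
    (hder_l : ∀ f g h, f ∈ Dspan R P → g ∈ Dspan R P → h ∈ Dspan R P →
      B (f * g) h = B f h * g + f * B g h)
    (hder_r : ∀ f g h, f ∈ Dspan R P → g ∈ Dspan R P → h ∈ Dspan R P →
      B f (g * h) = B f g * h + g * B f h)
    (hanti : ∀ f, f ∈ Dspan R P → B f f = 0)
    :
    (∀ (x y : P) (hxy : x < y),
      B (esingle R (le_refl x)) (esingle R hxy.le) =
        B (esingle R hxy.le) (esingle R (le_refl y))) ∧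
    (∀ (x y z : P) (hxy : x < y) (hyz : y < z),
      B (esingle R hxy.le) (esingle R hyz.le) =
        (B (esingle R (le_refl x)) (esingle R hxy.le)) x y •
          esingle R (hxy.trans hyz).le) := by
  have parta : ∀ (x y : P) (hxy : x < y),
      B (esingle R (le_refl x)) (esingle R hxy.le) =
        B (esingle R hxy.le) (esingle R (le_refl y)) := by
    intro x y hxy
    have rA := aux_lemA B hder_l hder_r hanti x y hxy
    have rA' := aux_lemA' B hder_l hder_r hanti x y hxy
    have hskew : B (esingle R (le_refl y)) (esingle R hxy.le)
        = - B (esingle R hxy.le) (esingle R (le_refl y)) := by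
      have hmem : esingle R hxy.le + esingle R (le_refl y) ∈ Dspan R P :=
        add_mem (esingle_mem_Dspan hxy.le) (esingle_mem_Dspan (le_refl y))
      have h0 := hanti (esingle R hxy.le + esingle R (le_refl y)) hmem
      rw [hadd_r _ _ _ hmem (esingle_mem_Dspan hxy.le) (esingle_mem_Dspan (le_refl y)),
        hadd_l _ _ _ (esingle_mem_Dspan hxy.le) (esingle_mem_Dspan (le_refl y))
          (esingle_mem_Dspan hxy.le),
        hadd_l _ _ _ (esingle_mem_Dspan hxy.le) (esingle_mem_Dspan (le_refl y))
          (esingle_mem_Dspan (le_refl y)),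
        hanti _ (esingle_mem_Dspan hxy.le), hanti _ (esingle_mem_Dspan (le_refl y)),
        zero_add, add_zero] at h0
      exact eq_neg_of_add_eq_zero_left h0
    have hz : B (0 : IncidenceAlgebra R P) (esingle R hxy.le) = 0 := by
      have h := hsmul_l 0 (esingle R hxy.le) (esingle R hxy.le)
        (esingle_mem_Dspan hxy.le) (esingle_mem_Dspan hxy.le)
      simpa using h
    have hds := hder_l (esingle R (le_refl x)) (esingle R (le_refl y)) (esingle R hxy.le)
      (esingle_mem_Dspan _) (esingle_mem_Dspan _) (esingle_mem_Dspan _)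
    rw [esingle_mul_esingle_ne (le_refl x) (le_refl y) hxy.ne, hz, hskew, rA, rA',
      smul_mul_assoc, esingle_mul_esingle_same hxy.le (le_refl y) hxy.le, mul_neg,
      mul_smul_comm, esingle_mul_esingle_same (le_refl x) hxy.le hxy.le] at hds
    -- hds : 0 = r • exy + -(s • exy)
    have hrs : (B (esingle R (le_refl x)) (esingle R hxy.le)) x y
        = (B (esingle R hxy.le) (esingle R (le_refl y))) x y := by
      have h := congrArg (fun f : IncidenceAlgebra R P => f x y) hds
      simp only [IncidenceAlgebra.zero_apply, IncidenceAlgebra.add_apply,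
        IncidenceAlgebra.neg_apply, IncidenceAlgebra.constSMul_apply, esingle_apply,
        and_self, if_true, eq_self_iff_true, smul_eq_mul, mul_one] at h
      linear_combination -h
    rw [rA, rA', hrs]
  refine ⟨parta, ?_⟩
  intro x y z hxy hyz
  have rA' := aux_lemA' B hder_l hder_r hanti x y hxy
  have h1 := hder_r (esingle R hxy.le) (esingle R (le_refl y)) (esingle R hyz.le)
    (esingle_mem_Dspan _) (esingle_mem_Dspan _) (esingle_mem_Dspan _)
  rw [esingle_mul_esingle_same (le_refl y) hyz.le hyz.le] at h1
  have h2 := hder_l (esingle R (le_refl x)) (esingle R hxy.le) (esingle R hyz.le)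
    (esingle_mem_Dspan _) (esingle_mem_Dspan _) (esingle_mem_Dspan _)
  rw [esingle_mul_esingle_same (le_refl x) hxy.le hxy.le] at h2
  have h3 : esingle R (le_refl y) * B (esingle R hxy.le) (esingle R hyz.le) = 0 := by
    conv_lhs => rw [h2]
    rw [mul_add, ← mul_assoc, ← mul_assoc, sandwich_zero (le_refl y) hxy.le hxy.not_ge,
      esingle_mul_esingle_ne (le_refl y) (le_refl x) hxy.ne', zero_mul, add_zero]
  rw [h3, add_zero, rA', smul_mul_assoc,
    esingle_mul_esingle_same hxy.le hyz.le (hxy.trans hyz).le] at h1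
  rw [parta x y hxy]
  exact h1
end

section
/- Suppose that the intersection of any two maximal chains of P has cardinality at least 2. Then every R-bilinear antisymmetric biderivation B of I(P,R) is inner: there exists r ∈ R such that B(f,g) = r·[f,g] for all f, g ∈ I(P,R). -/
set_option maxHeartbeats 1000000

set_option linter.unusedSectionVars false

namespace BiderAux

open Finset

variable {R P : Type*} [CommRing R] [PartialOrder P] [LocallyFiniteOrder P] [DecidableEq P]

def SE (R : Type*) [CommRing R] {P : Type*} [PartialOrder P] [DecidableEq P]
    (x y : P) (h : x ≤ y) : IncidenceAlgebra R P :=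
  ⟨fun a b => if a = x ∧ b = y then 1 else 0,
   fun a b hab => if_neg (by rintro ⟨rfl, rfl⟩; exact hab h)⟩

lemma SE_apply (x y : P) (h : x ≤ y) (a b : P) :
    SE R x y h a b = if a = x ∧ b = y then 1 else 0 := rfl

def ee (R : Type*) [CommRing R] {P : Type*} [PartialOrder P] [DecidableEq P] (x : P) :
    IncidenceAlgebra R P := SE R x x le_rfl

lemma ee_apply (x a b : P) : ee R x a b = if a = x ∧ b = x then 1 else 0 := rfl

lemma mul_SE (f : IncidenceAlgebra R P) (x y : P) (h : x ≤ y) (a b : P) :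
    (f * SE R x y h) a b = if b = y then f a x else 0 := by
  rw [IncidenceAlgebra.mul_apply]
  by_cases hb : b = y
  · subst hb
    by_cases hax : a ≤ x
    · rw [if_pos rfl, Finset.sum_eq_single x]
      · simp [SE_apply]
      · intro z hz hzx
        simp [SE_apply, hzx]
      · intro hx
        exact absurd (Finset.mem_Icc.mpr ⟨hax, h⟩) hx
    · rw [if_pos rfl, IncidenceAlgebra.apply_eq_zero_of_not_le hax]
      refine Finset.sum_eq_zero fun z hz => ?_
      rcases eq_or_ne z x with rfl | hzx
      · rw [IncidenceAlgebra.apply_eq_zero_of_not_le hax, zero_mul]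
      · simp [SE_apply, hzx]
  · rw [if_neg hb]
    refine Finset.sum_eq_zero fun z hz => ?_
    simp [SE_apply, hb]

lemma SE_mul (f : IncidenceAlgebra R P) (x y : P) (h : x ≤ y) (a b : P) :
    (SE R x y h * f) a b = if a = x then f y b else 0 := by
  rw [IncidenceAlgebra.mul_apply]
  by_cases ha : a = x
  · subst ha
    by_cases hyb : y ≤ b
    · rw [if_pos rfl, Finset.sum_eq_single y]
      · simp [SE_apply]
      · intro z hz hzy
        simp [SE_apply, hzy]
      · intro hy
        exact absurd (Finset.mem_Icc.mpr ⟨h, hyb⟩) hy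
    · rw [if_pos rfl, IncidenceAlgebra.apply_eq_zero_of_not_le hyb]
      refine Finset.sum_eq_zero fun z hz => ?_
      rcases eq_or_ne z y with rfl | hzy
      · rw [IncidenceAlgebra.apply_eq_zero_of_not_le hyb, mul_zero]
      · simp [SE_apply, hzy]
  · rw [if_neg ha]
    refine Finset.sum_eq_zero fun z hz => ?_
    simp [SE_apply, ha]

lemma mul_ee (f : IncidenceAlgebra R P) (y a b : P) :
    (f * ee R y) a b = if b = y then f a y else 0 := mul_SE f y y le_rfl a b

lemma ee_mul (f : IncidenceAlgebra R P) (x a b : P) :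
    (ee R x * f) a b = if a = x then f x b else 0 := SE_mul f x x le_rfl a b

lemma smul_entry (r : R) (f : IncidenceAlgebra R P) (a b : P) :
    (r • f) a b = r * f a b := rfl

lemma ee_mul_SE (x y : P) (h : x ≤ y) : ee R x * SE R x y h = SE R x y h := by
  ext a b hab
  rw [ee_mul, SE_apply]
  by_cases ha : a = x <;> simp [SE_apply, ha]

lemma SE_mul_ee (x y : P) (h : x ≤ y) : SE R x y h * ee R y = SE R x y h := by
  ext a b hab
  rw [mul_ee, SE_apply]
  by_cases hb : b = y <;> simp [SE_apply, hb, and_comm]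

lemma ee_mul_SE_ne (x y z : P) (h : x ≤ y) (hz : z ≠ x) : ee R z * SE R x y h = 0 := by
  ext a b hab
  rw [ee_mul]
  rw [IncidenceAlgebra.zero_apply]
  by_cases ha : a = z
  · rw [if_pos ha, SE_apply, if_neg (fun hc => hz hc.1)]
  · rw [if_neg ha]

lemma SE_mul_ee_ne (x y z : P) (h : x ≤ y) (hz : z ≠ y) : SE R x y h * ee R z = 0 := by
  ext a b hab
  rw [mul_ee]
  rw [IncidenceAlgebra.zero_apply]
  by_cases hb : b = z
  · rw [if_pos hb, SE_apply, if_neg (fun hc => hz hc.2)]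
  · rw [if_neg hb]

lemma SE_mul_SE (x y z : P) (h1 : x ≤ y) (h2 : y ≤ z) :
    SE R x y h1 * SE R y z h2 = SE R x z (h1.trans h2) := by
  ext a b hab
  rw [mul_SE, SE_apply]
  by_cases hb : b = z <;> simp [SE_apply, hb, and_comm]

lemma ee_mul_ee_self (x : P) : ee R x * ee R x = ee R x := SE_mul_ee x x le_rfl

lemma ee_mul_ee_ne (x y : P) (h : x ≠ y) : ee R x * ee R y = 0 :=
  ee_mul_SE_ne y y x le_rfl h

lemma sandwich (f : IncidenceAlgebra R P) (x y : P) (h : x ≤ y) :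
    ee R x * f * ee R y = f x y • SE R x y h := by
  ext a b hab
  rw [mul_ee, smul_entry, SE_apply]
  by_cases hb : b = y
  · subst hb
    rw [ee_mul]
    by_cases ha : a = x <;> simp [ha]
  · simp [hb]



structure IsBd (B : IncidenceAlgebra R P → IncidenceAlgebra R P → IncidenceAlgebra R P) : Prop where
  add_l : ∀ f g h, B (f + g) h = B f h + B g h
  add_r : ∀ f g h, B f (g + h) = B f g + B f h
  smul_l : ∀ (r : R) (f g), B (r • f) g = r • B f g
  smul_r : ∀ (r : R) (f g), B f (r • g) = r • B f g
  der_l : ∀ f g h, B (f * g) h = B f h * g + f * B g h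
  der_r : ∀ f g h, B f (g * h) = B f g * h + g * B f h
  anti : ∀ f, B f f = 0

namespace IsBd
variable {B : IncidenceAlgebra R P → IncidenceAlgebra R P → IncidenceAlgebra R P}

lemma skew (hB : IsBd B) (f g : IncidenceAlgebra R P) : B f g = -B g f := by
  have h0 := hB.anti (f + g)
  rw [hB.add_l, hB.add_r, hB.add_r, hB.anti, hB.anti, zero_add, add_zero] at h0
  exact eq_neg_of_add_eq_zero_left h0

lemma sub_r (hB : IsBd B) (f g h : IncidenceAlgebra R P) : B f (g - h) = B f g - B f h := by
  have h0 := hB.add_r f (g - h) h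
  rw [sub_add_cancel] at h0
  rw [eq_sub_iff_add_eq, ← h0]

lemma one_r (hB : IsBd B) (f : IncidenceAlgebra R P) : B f 1 = 0 := by
  have h0 := hB.der_r f 1 1
  rw [one_mul, mul_one, one_mul] at h0
  exact (left_eq_add.mp h0)

lemma bres (hB : IsBd B) (f g u v : IncidenceAlgebra R P) :
    B f g * (u * v - v * u) = (f * g - g * f) * B u v := by
  have h1 : B (f * u) (g * v)
      = (B f g * v + g * B f v) * u + f * (B u g * v + g * B u v) := by
    rw [hB.der_l, hB.der_r, hB.der_r]
  have h2 : B (f * u) (g * v)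
      = (B f g * u + f * B u g) * v + g * (B f v * u + f * B u v) := by
    rw [hB.der_r, hB.der_l, hB.der_l]
  have h3 := h2.symm.trans h1
  rw [← sub_eq_zero]
  have key : B f g * (u * v - v * u) - (f * g - g * f) * B u v
      = ((B f g * u + f * B u g) * v + g * (B f v * u + f * B u v))
        - ((B f g * v + g * B f v) * u + f * (B u g * v + g * B u v)) := by
    noncomm_ring
  rw [key, h3, sub_self]

lemma bres_z (hB : IsBd B) (f g z u v : IncidenceAlgebra R P) :
    B f g * z * (u * v - v * u) = (f * g - g * f) * z * B u v := by
  have E1 := hB.bres f g (z * u) v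
  rw [hB.der_l z u v] at E1
  have E2 := hB.bres f g z v
  have key : B f g * z * (u * v - v * u)
      = B f g * ((z * u) * v - v * (z * u)) - (B f g * (z * v - v * z)) * u := by
    noncomm_ring
  rw [key, E1, E2]
  noncomm_ring

end IsBd

lemma isBd_sub_inner {B : IncidenceAlgebra R P → IncidenceAlgebra R P → IncidenceAlgebra R P}
    (hB : IsBd B) (r : R) :
    IsBd (fun f g => B f g - r • (f * g - g * f)) where
  add_l f g h := by
    rw [hB.add_l]
    rw [show ((f+g)*h - h*(f+g)) = (f*h - h*f) + (g*h - h*g) by noncomm_ring, smul_add]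
    abel
  add_r f g h := by
    rw [hB.add_r]
    rw [show (f*(g+h) - (g+h)*f) = (f*g - g*f) + (f*h - h*f) by noncomm_ring, smul_add]
    abel
  smul_l c f g := by
    rw [hB.smul_l]
    rw [show ((c • f)*g - g*(c • f)) = c • (f*g - g*f) by
      rw [smul_mul_assoc, mul_smul_comm, smul_sub]]
    simp only [smul_comm r c, smul_sub]
  smul_r c f g := by
    rw [hB.smul_r]
    rw [show (f*(c • g) - (c • g)*f) = c • (f*g - g*f) by
      rw [smul_mul_assoc, mul_smul_comm, smul_sub]]
    simp only [smul_comm r c, smul_sub]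
  der_l f g h := by
    have h4 : (f*g)*h - h*(f*g) = (f*h - h*f)*g + f*(g*h - h*g) := by noncomm_ring
    rw [hB.der_l, h4, smul_add]
    simp only [sub_mul, mul_sub, smul_mul_assoc, mul_smul_comm, smul_sub]
    abel
  der_r f g h := by
    have h4 : f*(g*h) - (g*h)*f = (f*g - g*f)*h + g*(f*h - h*f) := by noncomm_ring
    rw [hB.der_r, h4, smul_add]
    simp only [sub_mul, mul_sub, smul_mul_assoc, mul_smul_comm, smul_sub]
    abel
  anti f := by rw [hB.anti, sub_self, smul_zero, sub_zero]


section Chunk4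
variable {B : IncidenceAlgebra R P → IncidenceAlgebra R P → IncidenceAlgebra R P}

/-- key vanishing of `B` on pairs of diagonal idempotents -/
lemma Bee (hB : IsBd B) (x y : P) : B (ee R x) (ee R y) = 0 := by
  rcases eq_or_ne x y with rfl | hxy
  · exact hB.anti _
  have supp1 := hB.der_l (ee R x) (ee R x) (ee R y)
  rw [ee_mul_ee_self] at supp1
  have supp2 := hB.der_r (ee R x) (ee R y) (ee R y)
  rw [ee_mul_ee_self] at supp2
  set u : IncidenceAlgebra R P := 1 - ee R x - ee R y with hu
  have hud : ∀ p q : P, p ≠ q → u p q = 0 := by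
    intro p q hpq
    rw [hu, IncidenceAlgebra.sub_apply, IncidenceAlgebra.sub_apply,
      IncidenceAlgebra.one_apply, ee_apply, ee_apply, if_neg hpq,
      if_neg (fun hc : p = x ∧ q = x => hpq (hc.1.trans hc.2.symm)),
      if_neg (fun hc : p = y ∧ q = y => hpq (hc.1.trans hc.2.symm))]
    ring
  have hudiag : ∀ a : P, u a a = if a = x ∨ a = y then 0 else 1 := by
    intro a
    rw [hu, IncidenceAlgebra.sub_apply, IncidenceAlgebra.sub_apply,
      IncidenceAlgebra.one_apply, ee_apply, ee_apply, if_pos rfl]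
    by_cases hax : a = x
    · rw [if_pos ⟨hax, hax⟩, if_neg (fun hc : a = y ∧ a = y => hxy ((hax.symm.trans hc.1))),
        if_pos (Or.inl hax)]
      ring
    · rw [if_neg (fun hc : a = x ∧ a = x => hax hc.1)]
      by_cases hay : a = y
      · rw [if_pos ⟨hay, hay⟩, if_pos (Or.inr hay)]; ring
      · rw [if_neg (fun hc : a = y ∧ a = y => hay hc.1), if_neg (by push_neg; exact ⟨hax, hay⟩)]
        ring
  have hXu : ∀ (X : IncidenceAlgebra R P) (a b : P), (X * u) a b = X a b * u b b := by
    intro X a b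
    rw [IncidenceAlgebra.mul_apply]
    rw [Finset.sum_eq_single b]
    · intro z _ hz
      rw [hud z b hz, mul_zero]
    · intro hb
      have hnab : ¬ a ≤ b := fun h => hb (Finset.mem_Icc.mpr ⟨h, le_rfl⟩)
      rw [IncidenceAlgebra.apply_eq_zero_of_not_le hnab, zero_mul]
  have huX : ∀ (X : IncidenceAlgebra R P) (a b : P), (u * X) a b = u a a * X a b := by
    intro X a b
    rw [IncidenceAlgebra.mul_apply]
    rw [Finset.sum_eq_single a]
    · intro z _ hz
      rw [hud a z (Ne.symm hz), zero_mul]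
    · intro ha
      have hnab : ¬ a ≤ b := fun h => ha (Finset.mem_Icc.mpr ⟨le_rfl, h⟩)
      rw [IncidenceAlgebra.apply_eq_zero_of_not_le hnab, mul_zero]
  have huu : u * u = u := by
    ext a b hab
    rw [hXu]
    rcases eq_or_ne a b with rfl | hab'
    · rw [hudiag a]
      split_ifs <;> ring
    · rw [hud a b hab', zero_mul]
  have hYeq : B (ee R x) u = -(B (ee R x) (ee R y)) := by
    rw [hu, hB.sub_r, hB.sub_r, hB.one_r, hB.anti]
    abel
  have hYdec := hB.der_r (ee R x) u u
  rw [huu] at hYdec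
  have hcorner : ∀ a b : P, (a = x ∨ a = y) → (b = x ∨ b = y) →
      B (ee R x) (ee R y) a b = 0 := by
    intro a b ha hb
    have huaa : u a a = 0 := by rw [hudiag]; exact if_pos ha
    have hubb : u b b = 0 := by rw [hudiag]; exact if_pos hb
    have h2 : B (ee R x) u a b
        = (B (ee R x) u * u) a b + (u * B (ee R x) u) a b := by
      rw [← IncidenceAlgebra.add_apply, ← hYdec]
    rw [hXu, huX, huaa, hubb, mul_zero, zero_mul, add_zero] at h2
    rw [hYeq, IncidenceAlgebra.neg_apply] at h2
    exact neg_eq_zero.mp h2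
  ext a b hab
  rw [IncidenceAlgebra.zero_apply]
  by_contra hAab
  have e1 := congrArg (fun X : IncidenceAlgebra R P => X a b) supp1
  simp only [IncidenceAlgebra.add_apply] at e1
  rw [mul_ee, ee_mul] at e1
  have e2 := congrArg (fun X : IncidenceAlgebra R P => X a b) supp2
  simp only [IncidenceAlgebra.add_apply] at e2
  rw [mul_ee, ee_mul] at e2
  have hax : a = x ∨ b = x := by
    by_contra hc
    push_neg at hc
    rw [if_neg hc.2, if_neg hc.1, add_zero] at e1
    exact hAab e1
  have hay : a = y ∨ b = y := by
    by_contra hc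
    push_neg at hc
    rw [if_neg hc.2, if_neg hc.1, add_zero] at e2
    exact hAab e2
  rcases hax with rfl | rfl
  · rcases hay with rfl | rfl
    · exact hxy rfl
    · exact hAab (hcorner a b (Or.inl rfl) (Or.inr rfl))
  · rcases hay with rfl | rfl
    · exact hAab (hcorner a b (Or.inr rfl) (Or.inl rfl))
    · exact hxy rfl

end Chunk4

section Chunk5
variable {B : IncidenceAlgebra R P → IncidenceAlgebra R P → IncidenceAlgebra R P}

lemma SE_proof_irrel (x y : P) (h1 h2 : x ≤ y) : SE R x y h1 = SE R x y h2 := rfl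

lemma BeSE (hB : IsBd B) (x y : P) (h : x ≤ y) :
    B (ee R x) (SE R x y h) = (B (ee R x) (SE R x y h)) x y • SE R x y h := by
  have h1 := hB.der_r (ee R x) (ee R x) (SE R x y h)
  rw [ee_mul_SE, hB.anti, zero_mul, zero_add] at h1
  have h2 := hB.der_r (ee R x) (SE R x y h) (ee R y)
  rw [SE_mul_ee, Bee hB, mul_zero, add_zero] at h2
  have h3 : B (ee R x) (SE R x y h) = ee R x * B (ee R x) (SE R x y h) * ee R y := by
    conv_lhs => rw [h2, h1]
  conv_lhs => rw [h3, sandwich _ x y h]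

lemma BSEe (hB : IsBd B) (x y : P) (h : x ≤ y) :
    B (SE R x y h) (ee R y) = (B (SE R x y h) (ee R y)) x y • SE R x y h := by
  have h1 := hB.der_l (SE R x y h) (ee R y) (ee R y)
  rw [SE_mul_ee, hB.anti, mul_zero, add_zero] at h1
  have h2 := hB.der_l (ee R x) (SE R x y h) (ee R y)
  rw [ee_mul_SE, Bee hB, zero_mul, zero_add] at h2
  have h3 : B (SE R x y h) (ee R y) = ee R x * B (SE R x y h) (ee R y) * ee R y := by
    conv_lhs => rw [h1, h2]
  conv_lhs => rw [h3, sandwich _ x y h]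

lemma BeSE_out (hB : IsBd B) {u w v : P} (hwv : w ≤ v) (huw : u ≠ w) (huv : u ≠ v) :
    B (ee R u) (SE R w v hwv) = 0 := by
  have h1 := hB.der_r (ee R u) (ee R w) (SE R w v hwv)
  rw [ee_mul_SE, Bee hB, zero_mul, zero_add] at h1
  have h2 := hB.der_r (ee R u) (SE R w v hwv) (ee R v)
  rw [SE_mul_ee, Bee hB, mul_zero, add_zero] at h2
  have h3 : B (ee R u) (SE R w v hwv) = ee R w * B (ee R u) (SE R w v hwv) * ee R v := by
    conv_lhs => rw [h2, h1]
  have h4 := hB.der_l (ee R u) (ee R u) (SE R w v hwv)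
  rw [ee_mul_ee_self] at h4
  have e := congrArg (fun X : IncidenceAlgebra R P => X w v) h4
  simp only [IncidenceAlgebra.add_apply] at e
  rw [mul_ee, ee_mul, if_neg (fun hc : v = u => huv hc.symm),
    if_neg (fun hc : w = u => huw hc.symm), add_zero] at e
  rw [h3, sandwich _ w v hwv, e, zero_smul]

lemma BSEe_out (hB : IsBd B) {u w v : P} (huw : u ≤ w) (huv : u ≠ v) (hwv : w ≠ v) :
    B (SE R u w huw) (ee R v) = 0 := by
  have h1 := hB.der_l (ee R u) (SE R u w huw) (ee R v)
  rw [ee_mul_SE, Bee hB, zero_mul, zero_add] at h1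
  have h2 := hB.der_l (SE R u w huw) (ee R w) (ee R v)
  rw [SE_mul_ee, Bee hB, mul_zero, add_zero] at h2
  have h3 : B (SE R u w huw) (ee R v) = ee R u * B (SE R u w huw) (ee R v) * ee R w := by
    conv_lhs => rw [h2, h1]
  have h4 := hB.der_r (SE R u w huw) (ee R v) (ee R v)
  rw [ee_mul_ee_self] at h4
  have e := congrArg (fun X : IncidenceAlgebra R P => X u w) h4
  simp only [IncidenceAlgebra.add_apply] at e
  rw [mul_ee, ee_mul, if_neg hwv, if_neg huv, add_zero] at e
  rw [h3, sandwich _ u w huw, e, zero_smul]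

lemma comm_ee_SE (x y : P) (h : x ≤ y) (hne : x ≠ y) :
    ee R x * SE R x y h - SE R x y h * ee R x = SE R x y h := by
  rw [ee_mul_SE, SE_mul_ee_ne x y x h hne, sub_zero]

lemma comm_SE_ee (x y : P) (h : x ≤ y) (hne : x ≠ y) :
    SE R x y h * ee R y - ee R y * SE R x y h = SE R x y h := by
  rw [SE_mul_ee, ee_mul_SE_ne x y y h (Ne.symm hne), sub_zero]

lemma scalar_eq (hB : IsBd B) {u v p q : P} (huv : u ≤ v) (hpq : p ≤ q) (hvp : v ≤ p)
    {a b c d : IncidenceAlgebra R P} {α β : R}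
    (hab : B a b = α • SE R u v huv) (hcom1 : a * b - b * a = SE R u v huv)
    (hcd : B c d = β • SE R p q hpq) (hcom2 : c * d - d * c = SE R p q hpq) :
    α = β := by
  have h0 := hB.bres_z a b (SE R v p hvp) c d
  rw [hab, hcom1, hcd, hcom2] at h0
  simp only [smul_mul_assoc, mul_smul_comm, SE_mul_SE] at h0
  have e := congrArg (fun X : IncidenceAlgebra R P => X u q) h0
  simpa [smul_entry, SE_apply] using e

lemma n_nested (hB : IsBd B) {u w v : P} (huw : u ≤ w) (hwv : w ≤ v)
    (hne_uw : u ≠ w) (hne_wv : w ≠ v) :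
    (B (ee R u) (SE R u v (huw.trans hwv))) u v = (B (ee R u) (SE R u w huw)) u w := by
  have hlt : u < v := (lt_of_le_of_ne huw hne_uw).trans (lt_of_le_of_ne hwv hne_wv)
  have hq : B (ee R u) (SE R w v hwv) = 0 := BeSE_out hB hwv hne_uw hlt.ne
  have h1 := hB.der_r (ee R u) (SE R u w huw) (SE R w v hwv)
  rw [SE_mul_SE, hq, mul_zero, add_zero, BeSE hB u w huw, smul_mul_assoc, SE_mul_SE] at h1
  have e := congrArg (fun X : IncidenceAlgebra R P => X u v) h1
  simpa [smul_entry, SE_apply] using e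

lemma m_nested (hB : IsBd B) {u w v : P} (huw : u ≤ w) (hwv : w ≤ v)
    (hne_uw : u ≠ w) (hne_wv : w ≠ v) :
    (B (SE R u v (huw.trans hwv)) (ee R v)) u v = (B (SE R w v hwv) (ee R v)) w v := by
  have hlt : u < v := (lt_of_le_of_ne huw hne_uw).trans (lt_of_le_of_ne hwv hne_wv)
  have hq : B (SE R u w huw) (ee R v) = 0 := BSEe_out hB huw hlt.ne hne_wv
  have h1 := hB.der_l (SE R u w huw) (SE R w v hwv) (ee R v)
  rw [SE_mul_SE, hq, zero_mul, zero_add, BSEe hB w v hwv, mul_smul_comm, SE_mul_SE] at h1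
  have e := congrArg (fun X : IncidenceAlgebra R P => X u v) h1
  simpa [smul_entry, SE_apply] using e

end Chunk5

section Chunk6
variable {B : IncidenceAlgebra R P → IncidenceAlgebra R P → IncidenceAlgebra R P}

lemma nn_eq (hB : IsBd B) {u v p q : P} (huv : u ≤ v) (hpq : p ≤ q) (hvp : v ≤ p)
    (hneuv : u ≠ v) (hnepq : p ≠ q) :
    (B (ee R u) (SE R u v huv)) u v = (B (ee R p) (SE R p q hpq)) p q :=
  scalar_eq hB huv hpq hvp (BeSE hB u v huv) (comm_ee_SE u v huv hneuv)
    (BeSE hB p q hpq) (comm_ee_SE p q hpq hnepq)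

lemma nm_eq (hB : IsBd B) {u v p q : P} (huv : u ≤ v) (hpq : p ≤ q) (hvp : v ≤ p)
    (hneuv : u ≠ v) (hnepq : p ≠ q) :
    (B (ee R u) (SE R u v huv)) u v = (B (SE R p q hpq) (ee R q)) p q :=
  scalar_eq hB huv hpq hvp (BeSE hB u v huv) (comm_ee_SE u v huv hneuv)
    (BSEe hB p q hpq) (comm_SE_ee p q hpq hnepq)

lemma mn_eq (hB : IsBd B) {u v p q : P} (huv : u ≤ v) (hpq : p ≤ q) (hvp : v ≤ p)
    (hneuv : u ≠ v) (hnepq : p ≠ q) :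
    (B (SE R u v huv) (ee R v)) u v = (B (ee R p) (SE R p q hpq)) p q :=
  scalar_eq hB huv hpq hvp (BSEe hB u v huv) (comm_SE_ee u v huv hneuv)
    (BeSE hB p q hpq) (comm_ee_SE p q hpq hnepq)

lemma mm_eq (hB : IsBd B) {u v p q : P} (huv : u ≤ v) (hpq : p ≤ q) (hvp : v ≤ p)
    (hneuv : u ≠ v) (hnepq : p ≠ q) :
    (B (SE R u v huv) (ee R v)) u v = (B (SE R p q hpq) (ee R q)) p q :=
  scalar_eq hB huv hpq hvp (BSEe hB u v huv) (comm_SE_ee u v huv hneuv)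
    (BSEe hB p q hpq) (comm_SE_ee p q hpq hnepq)

/-- equality of `n`-scalars for edges inside a common chain, ordered case -/
lemma n_chain_aux (hB : IsBd B) {C : Set P} (hC : IsChain (· ≤ ·) C)
    {a b c d : P} (ha : a ∈ C) (hb : b ∈ C) (hc : c ∈ C) (hd : d ∈ C)
    (hab : a < b) (hcd : c < d) (hac : a ≤ c) :
    (B (ee R a) (SE R a b hab.le)) a b = (B (ee R c) (SE R c d hcd.le)) c d := by
  by_cases hbc : b ≤ c
  · exact nn_eq hB hab.le hcd.le hbc hab.ne hcd.ne
  · have hcb : c ≤ b := (hC.total hc hb).resolve_right hbc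
    rcases eq_or_ne a c with rfl | hne_ac
    · -- shared left endpoint
      rcases hC.total hb hd with hbd | hdb
      · rcases eq_or_ne b d with rfl | hne_bd
        · rfl
        · exact (n_nested hB hab.le hbd hab.ne hne_bd).symm
      · rcases eq_or_ne d b with rfl | hne_db
        · rfl
        · exact n_nested hB hcd.le hdb hcd.ne hne_db
    · -- a < c < b
      have h1 : (B (ee R a) (SE R a b hab.le)) a b = (B (ee R a) (SE R a c hac)) a c :=
        n_nested hB hac hcb hne_ac (fun hcb' => hbc (hcb'.ge))
      have h2 : (B (ee R a) (SE R a c hac)) a c = (B (ee R c) (SE R c d hcd.le)) c d :=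
        nn_eq hB hac hcd.le le_rfl hne_ac hcd.ne
      exact h1.trans h2

lemma n_chain (hB : IsBd B) {C : Set P} (hC : IsChain (· ≤ ·) C)
    {a b c d : P} (ha : a ∈ C) (hb : b ∈ C) (hc : c ∈ C) (hd : d ∈ C)
    (hab : a < b) (hcd : c < d) :
    (B (ee R a) (SE R a b hab.le)) a b = (B (ee R c) (SE R c d hcd.le)) c d := by
  rcases eq_or_ne a c with rfl | hne
  · exact n_chain_aux hB hC ha hb hc hd hab hcd le_rfl
  · rcases hC.total ha hc with hac | hca
    · exact n_chain_aux hB hC ha hb hc hd hab hcd hac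
    · exact (n_chain_aux hB hC hc hd ha hb hcd hab hca).symm

/-- `n = m` on an edge which has some comparable context -/
lemma nm_eq_self (hB : IsBd B) {u v : P} (huv : u < v)
    (hctx : (∃ c, v < c) ∨ (∃ c, c < u) ∨ (∃ w, u < w ∧ w < v)) :
    (B (ee R u) (SE R u v huv.le)) u v = (B (SE R u v huv.le) (ee R v)) u v := by
  rcases hctx with ⟨c, hc⟩ | ⟨c, hc⟩ | ⟨w, hw1, hw2⟩
  · have h1 := nn_eq hB huv.le hc.le le_rfl huv.ne hc.ne
    have h2 := mn_eq hB huv.le hc.le le_rfl huv.ne hc.ne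
    exact h1.trans h2.symm
  · have h1 := nn_eq hB hc.le huv.le le_rfl hc.ne huv.ne
    have h2 := nm_eq hB hc.le huv.le le_rfl hc.ne huv.ne
    exact h1.symm.trans h2
  · have h1 : (B (ee R u) (SE R u v huv.le)) u v = (B (ee R u) (SE R u w hw1.le)) u w :=
      n_nested hB hw1.le hw2.le hw1.ne hw2.ne
    have h2 : (B (SE R u v huv.le) (ee R v)) u v = (B (SE R w v hw2.le) (ee R v)) w v :=
      m_nested hB hw1.le hw2.le hw1.ne hw2.ne
    have h3 := nm_eq hB hw1.le hw2.le le_rfl hw1.ne hw2.ne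
    rw [h1, h2, h3]

end Chunk6

section Chunk7
variable {B : IncidenceAlgebra R P → IncidenceAlgebra R P → IncidenceAlgebra R P}

lemma vanish (hB : IsBd B)
    (h1 : ∀ (u v : P) (h : u ≤ v), B (ee R u) (SE R u v h) = 0)
    (h2 : ∀ (u v : P) (h : u ≤ v), B (SE R u v h) (ee R v) = 0) :
    ∀ f g, B f g = 0 := by
  have lemZ : ∀ (s : P) (g : IncidenceAlgebra R P) (t : P), s ≤ t → B (ee R s) g s t = 0 := by
    intro s g t hst
    have k1 : B (ee R s) (ee R s * g) = ee R s * B (ee R s) g := by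
      rw [hB.der_r, hB.anti, zero_mul, zero_add]
    have k2 := hB.der_r (ee R s) (ee R s * g) (ee R t)
    rw [Bee hB s t, mul_zero, add_zero, k1] at k2
    rw [sandwich g s t hst, hB.smul_r, h1 s t hst, smul_zero] at k2
    rw [sandwich (B (ee R s) g) s t hst] at k2
    have e := congrArg (fun X : IncidenceAlgebra R P => X s t) k2
    simpa [smul_entry, SE_apply] using e.symm
  have lemW : ∀ (hh : IncidenceAlgebra R P) (t w : P), w ≤ t → B hh (ee R t) w t = 0 := by
    intro hh t w hwt
    have k1 : B (ee R w * hh) (ee R t) = ee R w * B hh (ee R t) := by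
      rw [hB.der_l, Bee hB, zero_mul, zero_add]
    have k2 := hB.der_l (ee R w * hh) (ee R t) (ee R t)
    rw [hB.anti, mul_zero, add_zero] at k2
    rw [sandwich hh w t hwt, hB.smul_l, h2 w t hwt, smul_zero] at k2
    have e1 : B hh (ee R t) w t = (ee R w * B hh (ee R t)) w t := by
      rw [ee_mul, if_pos rfl]
    rw [e1, ← k1]
    have e2 : B (ee R w * hh) (ee R t) w t
        = (B (ee R w * hh) (ee R t) * ee R t) w t := by
      rw [mul_ee, if_pos rfl]
    rw [e2, ← k2, IncidenceAlgebra.zero_apply]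
  intro f g
  ext s t hst
  rw [IncidenceAlgebra.zero_apply]
  have s1 : B f g s t = B (ee R s * f) g s t := by
    have k := hB.der_l (ee R s) f g
    have e := congrArg (fun X : IncidenceAlgebra R P => X s t) k
    simp only [IncidenceAlgebra.add_apply] at e
    rw [ee_mul, if_pos rfl] at e
    have hz : (B (ee R s) g * f) s t = 0 := by
      rw [IncidenceAlgebra.mul_apply]
      refine Finset.sum_eq_zero fun w hw => ?_
      rw [lemZ s g w (Finset.mem_Icc.mp hw).1, zero_mul]
    rw [hz, zero_add] at e
    exact e.symm
  have s2 : B (ee R s * f) g s t = B (ee R s * f) (g * ee R t) s t := by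
    have k := hB.der_r (ee R s * f) g (ee R t)
    have e := congrArg (fun X : IncidenceAlgebra R P => X s t) k
    simp only [IncidenceAlgebra.add_apply] at e
    rw [mul_ee, if_pos rfl] at e
    have hz : (g * B (ee R s * f) (ee R t)) s t = 0 := by
      rw [IncidenceAlgebra.mul_apply]
      refine Finset.sum_eq_zero fun w hw => ?_
      rw [lemW _ t w (Finset.mem_Icc.mp hw).2, mul_zero]
    rw [hz, add_zero] at e
    exact e.symm
  have s3 : B (ee R s * f) (g * ee R t) s t
      = g s t * B (ee R s * f) (SE R s t hst) s t := by
    have k1 := hB.der_r (ee R s * f) (ee R s) (g * ee R t)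
    have kk : ee R s * (g * ee R t) = g s t • SE R s t hst := by
      rw [← mul_assoc]; exact sandwich g s t hst
    rw [kk, hB.smul_r] at k1
    have e := congrArg (fun X : IncidenceAlgebra R P => X s t) k1
    simp only [IncidenceAlgebra.add_apply, smul_entry] at e
    rw [ee_mul, if_pos rfl] at e
    have hz : (B (ee R s * f) (ee R s) * (g * ee R t)) s t = 0 := by
      rw [IncidenceAlgebra.mul_apply]
      refine Finset.sum_eq_zero fun w hw => ?_
      have hzz : B (ee R s * f) (ee R s) s w = 0 := by
        rw [hB.skew, IncidenceAlgebra.neg_apply,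
          lemZ s (ee R s * f) w (Finset.mem_Icc.mp hw).1, neg_zero]
      rw [hzz, zero_mul]
    rw [hz, zero_add] at e
    exact e.symm
  have s4 : B (ee R s * f) (SE R s t hst) s t = 0 := by
    rcases eq_or_ne s t with rfl | hne
    · exact lemW (ee R s * f) s s le_rfl
    · have k1 := hB.der_r (ee R s * f) (SE R s t hst) (ee R t)
      rw [SE_mul_ee] at k1
      have e1 := congrArg (fun X : IncidenceAlgebra R P => X s t) k1
      simp only [IncidenceAlgebra.add_apply] at e1
      rw [SE_mul (B (ee R s * f) (ee R t)) s t hst, if_pos rfl] at e1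
      rw [lemW (ee R s * f) t t le_rfl, add_zero] at e1
      have k3 : (ee R s * f) * ee R t = f s t • SE R s t hst := sandwich f s t hst
      have k2 := hB.der_l (ee R s * f) (ee R t) (SE R s t hst)
      rw [k3, hB.smul_l, hB.anti, smul_zero] at k2
      have k4 : B (ee R t) (SE R s t hst) = 0 := by
        rw [hB.skew, h2 s t hst, neg_zero]
      rw [k4, mul_zero, add_zero] at k2
      have e2 : B (ee R s * f) (SE R s t hst) s t
          = (B (ee R s * f) (SE R s t hst) * ee R t) s t := by
        rw [mul_ee, if_pos rfl]
      rw [e2, ← k2, IncidenceAlgebra.zero_apply]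
  rw [s1, s2, s3, s4, mul_zero]

end Chunk7

section Chunk8
variable {B : IncidenceAlgebra R P → IncidenceAlgebra R P → IncidenceAlgebra R P}

lemma IsBd.one_l (hB : IsBd B) (f : IncidenceAlgebra R P) : B 1 f = 0 := by
  have h0 := hB.der_l 1 1 f
  rw [one_mul, mul_one, one_mul] at h0
  exact (right_eq_add.mp h0)

end Chunk8
end BiderAux

open BiderAux in
/-- If the intersection of any two maximal chains of `P` has cardinality at
least `2`, then every `R`-bilinear antisymmetric biderivation of `I(P,R)` is inner: there is
`r ∈ R` with `B f g = r • [f, g]` for all `f, g`. -/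
theorem antisymm_bider_inner_of_maxChains_intersect
    {R P : Type*} [CommRing R] [PartialOrder P] [LocallyFiniteOrder P] [DecidableEq P]
    (hP : ∀ C D : Set P, IsMaxChain (· ≤ ·) C → IsMaxChain (· ≤ ·) D → (C ∩ D).Nontrivial)
    (B : IncidenceAlgebra R P → IncidenceAlgebra R P → IncidenceAlgebra R P)
    (hadd_l : ∀ f g h, B (f + g) h = B f h + B g h)
    (hadd_r : ∀ f g h, B f (g + h) = B f g + B f h)
    (hsmul_l : ∀ (r : R) (f g), B (r • f) g = r • B f g)
    (hsmul_r : ∀ (r : R) (f g), B f (r • g) = r • B f g)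
    (hder_l : ∀ f g h, B (f * g) h = B f h * g + f * B g h)
    (hder_r : ∀ f g h, B f (g * h) = B f g * h + g * B f h)
    (hanti : ∀ f, B f f = 0)
    :
    ∃ r : R, ∀ f g : IncidenceAlgebra R P, B f g = r • (f * g - g * f) := by
  have hB : IsBd B := ⟨hadd_l, hadd_r, hsmul_l, hsmul_r, hder_l, hder_r, hanti⟩
  -- an edge exists
  obtain ⟨C₀, hC₀, -⟩ := (IsChain.empty : IsChain (· ≤ ·) (∅ : Set P)).exists_maxChain
  obtain ⟨x, hx, y, hy, hxy⟩ := hP C₀ C₀ hC₀ hC₀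
  obtain ⟨u₀, v₀, hu₀v₀⟩ : ∃ u v : P, u < v := by
    rcases hC₀.isChain hx.1 hy.1 hxy with h | h
    exacts [⟨x, y, lt_of_le_of_ne h hxy⟩, ⟨y, x, lt_of_le_of_ne h (Ne.symm hxy)⟩]
  -- every edge extends to a maximal chain
  have edge_chain : ∀ {u v : P}, u ≤ v → IsChain (· ≤ ·) ({u, v} : Set P) := by
    intro u v huv a ha b hb hne
    rcases ha with rfl | ha <;> rcases hb with rfl | hb
    · exact absurd rfl hne
    · rw [Set.mem_singleton_iff] at hb; subst hb; exact Or.inl huv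
    · rw [Set.mem_singleton_iff] at ha; subst ha; exact Or.inr huv
    · rw [Set.mem_singleton_iff] at ha hb; subst ha; subst hb; exact absurd rfl hne
  have edge_max : ∀ {u v : P}, u ≤ v → ∃ C, IsMaxChain (· ≤ ·) C ∧ u ∈ C ∧ v ∈ C := by
    intro u v huv
    obtain ⟨C, hC, hsub⟩ := (edge_chain huv).exists_maxChain
    exact ⟨C, hC, hsub (by left; rfl), hsub (by right; rfl)⟩
  set r : R := (B (ee R u₀) (SE R u₀ v₀ hu₀v₀.le)) u₀ v₀ with hrdef
  -- all scalars equal `r`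
  have hnr : ∀ (u v : P) (huv : u < v),
      (B (ee R u) (SE R u v huv.le)) u v = r ∧ (B (SE R u v huv.le) (ee R v)) u v = r := by
    intro u v huv
    by_cases hctx : (∃ c, v < c) ∨ (∃ c, c < u) ∨ (∃ w, u < w ∧ w < v)
    · have hnm := nm_eq_self hB huv hctx
      obtain ⟨C, hC, huC, hvC⟩ := edge_max huv.le
      obtain ⟨D, hD, hu0D, hv0D⟩ := edge_max hu₀v₀.le
      obtain ⟨a, ha, b, hb, hab⟩ := hP C D hC hD
      obtain ⟨p, q, hpq, hpC, hqC, hpD, hqD⟩ :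
          ∃ p q : P, p < q ∧ p ∈ C ∧ q ∈ C ∧ p ∈ D ∧ q ∈ D := by
        rcases hC.isChain ha.1 hb.1 hab with h | h
        exacts [⟨a, b, lt_of_le_of_ne h hab, ha.1, hb.1, ha.2, hb.2⟩,
          ⟨b, a, lt_of_le_of_ne h (Ne.symm hab), hb.1, ha.1, hb.2, ha.2⟩]
      have h1 : (B (ee R u) (SE R u v huv.le)) u v = (B (ee R p) (SE R p q hpq.le)) p q :=
        n_chain hB hC.isChain huC hvC hpC hqC huv hpq
      have h2 : (B (ee R u₀) (SE R u₀ v₀ hu₀v₀.le)) u₀ v₀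
          = (B (ee R p) (SE R p q hpq.le)) p q :=
        n_chain hB hD.isChain hu0D hv0D hpD hqD hu₀v₀ hpq
      have hn : (B (ee R u) (SE R u v huv.le)) u v = r := h1.trans h2.symm
      exact ⟨hn, hnm.symm.trans hn⟩
    · push_neg at hctx
      obtain ⟨hno_up, hno_down, hno_mid⟩ := hctx
      have hmax : IsMaxChain (· ≤ ·) ({u, v} : Set P) := by
        refine ⟨edge_chain huv.le, fun t ht hsub => (Set.Subset.antisymm hsub ?_)⟩
        intro z hz
        rcases eq_or_ne z u with rfl | hzu
        · left; rfl
        rcases eq_or_ne z v with rfl | hzv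
        · right; rfl
        rcases ht hz (hsub (by left; rfl)) hzu with hle | hge
        · exact absurd (lt_of_le_of_ne hle hzu) (hno_down z)
        · rcases ht hz (hsub (by right; rfl)) hzv with hle' | hge'
          · exact absurd (lt_of_le_of_ne hle' hzv)
              (hno_mid z (lt_of_le_of_ne hge (Ne.symm hzu)))
          · exact absurd (lt_of_le_of_ne hge' (Ne.symm hzv)) (hno_up z)
      have hall : ∀ z : P, z = u ∨ z = v := by
        intro z
        obtain ⟨D, hD, hsubD⟩ := (IsChain.singleton : IsChain (· ≤ ·) {z}).exists_maxChain
        have hzD : z ∈ D := hsubD rfl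
        obtain ⟨a, ha, b, hb, hab⟩ := hP {u, v} D hmax hD
        have huvD : u ∈ D ∧ v ∈ D := by
          rcases ha.1 with rfl | ha1 <;> rcases hb.1 with rfl | hb1
          · exact absurd rfl hab
          · rw [Set.mem_singleton_iff] at hb1; subst hb1; exact ⟨ha.2, hb.2⟩
          · rw [Set.mem_singleton_iff] at ha1; subst ha1; exact ⟨hb.2, ha.2⟩
          · rw [Set.mem_singleton_iff] at ha1 hb1; subst ha1; subst hb1
            exact absurd rfl hab
        rcases eq_or_ne z u with rfl | hzu
        · exact Or.inl rfl
        rcases eq_or_ne z v with rfl | hzv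
        · exact Or.inr rfl
        rcases hD.isChain hzD huvD.1 hzu with hle | hge
        · exact absurd (lt_of_le_of_ne hle hzu) (hno_down z)
        · rcases hD.isChain hzD huvD.2 hzv with hle' | hge'
          · exact absurd (lt_of_le_of_ne hle' hzv)
              (hno_mid z (lt_of_le_of_ne hge (Ne.symm hzu)))
          · exact absurd (lt_of_le_of_ne hge' (Ne.symm hzv)) (hno_up z)
      have hone : (1 : IncidenceAlgebra R P) = ee R u + ee R v := by
        ext a b hab2
        rw [IncidenceAlgebra.add_apply, IncidenceAlgebra.one_apply, ee_apply, ee_apply]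
        rcases hall a with ha | ha <;> rcases hall b with hb | hb
        · rw [if_pos (ha.trans hb.symm), if_pos ⟨ha, hb⟩,
            if_neg (fun hc : a = v ∧ b = v => huv.ne (ha.symm.trans hc.1))]
          ring
        · rw [if_neg (fun he : a = b => huv.ne ((ha.symm.trans he).trans hb)),
            if_neg (fun hc : a = u ∧ b = u => huv.ne (hc.2.symm.trans hb)),
            if_neg (fun hc : a = v ∧ b = v => huv.ne (ha.symm.trans hc.1))]
          ring
        · exfalso
          rw [ha, hb] at hab2
          exact absurd hab2 (not_le_of_gt huv)
        · rw [if_pos (ha.trans hb.symm),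
            if_neg (fun hc : a = u ∧ b = u => huv.ne (hc.1.symm.trans ha)),
            if_pos ⟨ha, hb⟩]
          ring
      have h0 : B 1 (SE R u v huv.le) = 0 := hB.one_l _
      rw [hone, hB.add_l, hB.skew (ee R v) (SE R u v huv.le)] at h0
      have h0' : B (ee R u) (SE R u v huv.le) = B (SE R u v huv.le) (ee R v) :=
        add_neg_eq_zero.mp h0
      have hent : (B (ee R u) (SE R u v huv.le)) u v
          = (B (SE R u v huv.le) (ee R v)) u v := congrArg (fun X => X u v) h0'
      have hreq : (B (ee R u) (SE R u v huv.le)) u v = r := by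
        have hcase : u₀ = u ∧ v₀ = v := by
          rcases hall u₀ with h1 | h1 <;> rcases hall v₀ with h2 | h2
          · exfalso; rw [h1, h2] at hu₀v₀; exact lt_irrefl u hu₀v₀
          · exact ⟨h1, h2⟩
          · exfalso; rw [h1, h2] at hu₀v₀; exact lt_asymm huv hu₀v₀
          · exfalso; rw [h1, h2] at hu₀v₀; exact lt_irrefl v hu₀v₀
        obtain ⟨he1, he2⟩ := hcase
        subst he1; subst he2
        exact hrdef.symm
      exact ⟨hreq, hent.symm.trans hreq⟩
  -- subtract the inner biderivation and show the rest vanishes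
  refine ⟨r, fun f g => ?_⟩
  have hB' := isBd_sub_inner hB r
  have h1' : ∀ (u v : P) (h : u ≤ v),
      B (ee R u) (SE R u v h) - r • (ee R u * SE R u v h - SE R u v h * ee R u) = 0 := by
    intro u v h
    rcases eq_or_ne u v with rfl | hne
    · have hse : SE R u u h = ee R u := rfl
      rw [hse, hB.anti, sub_self, smul_zero, sub_zero]
    · have hval : (B (ee R u) (SE R u v h)) u v = r := (hnr u v (lt_of_le_of_ne h hne)).1
      rw [comm_ee_SE u v h hne, BeSE hB u v h, hval, sub_self]
  have h2' : ∀ (u v : P) (h : u ≤ v),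
      B (SE R u v h) (ee R v) - r • (SE R u v h * ee R v - ee R v * SE R u v h) = 0 := by
    intro u v h
    rcases eq_or_ne u v with rfl | hne
    · have hse : SE R u u h = ee R u := rfl
      rw [hse, hB.anti, sub_self, smul_zero, sub_zero]
    · have hval : (B (SE R u v h) (ee R v)) u v = r := (hnr u v (lt_of_le_of_ne h hne)).2
      rw [comm_SE_ee u v h hne, BSEe hB u v h, hval, sub_self]
  have hv := vanish hB' h1' h2' f g
  exact sub_eq_zero.mp hv
end
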